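/- Let (L, ≤) be a finite distributive lattice, P a prime ideal of L, and let Y/X and Y'/X' be distinct p-factors in the girdle G(P). Then X ≠ X' and Y ≠ Y'. -/
import Mathlib


namespace GirdleStmt

variable {L : Type*} [DistribLattice L] [Fintype L]

/-- `P` is an ideal of the lattice: closed under joins of its members and under
meets with arbitrary elements. -/
def IsIdealSet (P : Set L) : Prop :=
  (∀ X ∈ P, ∀ Y ∈ P, X ⊔ Y ∈ P) ∧ (∀ X ∈ P, ∀ Z : L, X ⊓ Z ∈ P)

/-- `P` is a filter of the lattice: closed under meets of its members and under
joins with arbitrary elements. -/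
def IsFilterSet (P : Set L) : Prop :=
  (∀ X ∈ P, ∀ Y ∈ P, X ⊓ Y ∈ P) ∧ (∀ X ∈ P, ∀ Z : L, X ⊔ Z ∈ P)

/-- `P` is a prime ideal: a (nonempty, proper) ideal whose complement is a filter. -/
def IsPrimeIdealSet (P : Set L) : Prop :=
  IsIdealSet P ∧ IsFilterSet Pᶜ ∧ P.Nonempty ∧ Pᶜ.Nonempty

/-- The girdle of a prime ideal `P`: the set of p-factors `Y/X` (covering pairs,
encoded as pairs `(X, Y)` with `X ⋖ Y`) with `X ∈ P` and `Y ∉ P`. -/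
def girdle (P : Set L) : Set (L × L) :=
  {p | p.1 ⋖ p.2 ∧ p.1 ∈ P ∧ p.2 ∉ P}

/-- A maximal (dense) chain of the lattice, from the minimum to the maximum, with
consecutive elements in covering relation. -/
structure MaxChain (L : Type*) [Lattice L] where
  n : ℕ
  ch : Fin (n + 1) → L
  bot : ∀ X : L, ch 0 ≤ X
  top : ∀ X : L, X ≤ ch (Fin.last n)
  cov : ∀ i : Fin n, ch i.castSucc ⋖ ch i.succ

/-- The order `G(P) ≺ G(P')` on girdles: in every maximal chain, every p-factor of
`G(P)` occurring in the chain occurs strictly earlier than every p-factor of `G(P')`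
occurring in the chain. -/
def GirdlePrec (P P' : Set L) : Prop :=
  ∀ (C : MaxChain L) (i j : Fin C.n),
    (C.ch i.castSucc, C.ch i.succ) ∈ girdle P →
    (C.ch j.castSucc, C.ch j.succ) ∈ girdle P' →
    (i : ℕ) < (j : ℕ)


/-- Property (5.3): distinct p-factors in the girdle of a prime ideal `P` are
pairwise disjoint: they share neither their lower nor their upper element. -/
theorem statement12 (P : Set L) (hP : IsPrimeIdealSet P)
    (X Y X' Y' : L)
    (h1 : (X, Y) ∈ girdle P) (h2 : (X', Y') ∈ girdle P)
    (hne : (X, Y) ≠ (X', Y')) :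
    X ≠ X' ∧ Y ≠ Y' := by
  simp only [girdle, Set.mem_setOf_eq] at h1 h2
  obtain ⟨hc1, hXP, hYP⟩ := h1
  obtain ⟨hc2, hXP', hYP'⟩ := h2
  obtain ⟨hI, hF, -, -⟩ := hP
  constructor
  · rintro rfl
    have hYne : Y ≠ Y' := by
      intro h; exact hne (by rw [h])
    have hmem : Y ⊓ Y' ∉ P := hF.1 Y hYP Y' hYP'
    have hle : X ≤ Y ⊓ Y' := le_inf hc1.le hc2.le
    rcases hc1.eq_or_eq hle inf_le_left with h | h
    · exact hmem (h ▸ hXP)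
    · have hYY' : Y ≤ Y' := by rw [← h]; exact inf_le_right
      rcases hc2.eq_or_eq hc1.lt.le hYY' with h2 | h2
      · exact absurd h2.symm hc1.lt.ne
      · exact hYne h2
  · rintro rfl
    have hXne : X ≠ X' := by
      intro h; exact hne (by rw [h])
    have hmem : X ⊔ X' ∈ P := hI.1 X hXP X' hXP'
    have hle : X ⊔ X' ≤ Y := sup_le hc1.le hc2.le
    rcases hc1.eq_or_eq le_sup_left hle with h | h
    · have hXX' : X' ≤ X := by rw [← h]; exact le_sup_right
      rcases hc2.eq_or_eq hXX' hc1.lt.le with h2 | h2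
      · exact hXne h2
      · exact absurd h2 hc1.lt.ne
    · exact hYP (h ▸ hmem)

end GirdleStmt
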